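/- Let L be a linear classifier on {0,1}^d with weights w and threshold t, let x ∈ {0,1}^d, and let s_i = w_i·(2x_i − 1)·(2L(x) − 1) be the feature scores. Suppose i, j are features with s_i ≤ s_j, and y ⊆ x is a partial instance with y_i defined and y_j undefined. Let y' = (y ⊖ i) ⊕ j be the partial instance obtained by undefining coordinate i and setting coordinate j to x_j. Then Pr_{z ∈ comp(y')}[L(z) = L(x)] ≥ Pr_{z ∈ comp(y)}[L(z) = L(x)] under the uniform distribution over completions. -/

import Mathlib

/-- Output of the linear classifier with weights `w` and threshold `t` on `z ∈ {0,1}^d`. -/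
def linOut {d : ℕ} (w : Fin d → ℚ) (t : ℚ) (z : Fin d → Bool) : Bool :=
  decide (t ≤ ∑ i, w i * (if z i then 1 else 0))

/-- Completions of a partial instance `y ∈ {0,1,⊥}^d`. -/
def completions {d : ℕ} (y : Fin d → Option Bool) : Finset (Fin d → Bool) :=
  Finset.univ.filter (fun z => ∀ i, ∀ b, y i = some b → z i = b)

/-- `Pr_{z ~ U(y)}[L(z) = L(x)]`, uniform over the completions of `y`. -/
def prSame {d : ℕ} (w : Fin d → ℚ) (t : ℚ) (x : Fin d → Bool)
    (y : Fin d → Option Bool) : ℚ :=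
  (((completions y).filter (fun z => linOut w t z = linOut w t x)).card : ℚ)
    / ((completions y).card : ℚ)

/-- Score of feature `i`: `w_i (2x_i - 1)(2L(x) - 1)`. -/
def score {d : ℕ} (w : Fin d → ℚ) (t : ℚ) (x : Fin d → Bool) (i : Fin d) : ℚ :=
  w i * (2 * (if x i then 1 else 0) - 1) * (2 * (if linOut w t x then 1 else 0) - 1)

/-- `y ⊆ x`: the partial instance `y` agrees with `x` on its defined coordinates. -/
def subsetOf {d : ℕ} (y : Fin d → Option Bool) (x : Fin d → Bool) : Prop :=
  ∀ i, ∀ b, y i = some b → x i = b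

lemma mem_completions_iff {d : ℕ} (y : Fin d → Option Bool) (z : Fin d → Bool) :
    z ∈ completions y ↔ ∀ i, ∀ b, y i = some b → z i = b := by
  simp [completions]

lemma bool_flip {a b : Bool} (h : a ≠ b) : a = !b := by
  cases a <;> cases b <;> simp_all

lemma sumS_update {d : ℕ} (w : Fin d → ℚ) (z : Fin d → Bool) (a : Fin d) (b : Bool) :
    (∑ k, w k * (if Function.update z a b k then (1:ℚ) else 0))
      = (∑ k, w k * (if z k then (1:ℚ) else 0))
        + w a * ((if b then (1:ℚ) else 0) - (if z a then (1:ℚ) else 0)) := by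
  have h : ∀ k : Fin d, w k * (if Function.update z a b k then (1:ℚ) else 0)
      = w k * (if z k then (1:ℚ) else 0)
        + (if k = a then w a * ((if b then (1:ℚ) else 0) - (if z a then (1:ℚ) else 0)) else 0) := by
    intro k
    by_cases hk : k = a
    · subst hk
      rw [Function.update_self, if_pos rfl]
      ring
    · rw [Function.update_of_ne hk, if_neg hk]
      ring
  rw [Finset.sum_congr rfl fun k _ => h k, Finset.sum_add_distrib]
  simp

/-- key analytic step: flipping `i` away from `x` and `j` towards `x` keeps the output. -/
lemma key_flip {d : ℕ} (w : Fin d → ℚ) (t : ℚ) (x : Fin d → Bool) (i j : Fin d)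
    (hij : score w t x i ≤ score w t x j) (hne : i ≠ j) (z : Fin d → Bool)
    (hzi : z i = x i) (hzj : z j ≠ x j) (hL : linOut w t z = linOut w t x) :
    linOut w t (Function.update (Function.update z i (!(x i))) j (x j)) = linOut w t x := by
  set S0 : ℚ := ∑ k, w k * (if z k then (1:ℚ) else 0) with hS0
  have hupd : (∑ k, w k * (if (Function.update (Function.update z i (!(x i))) j (x j)) k then (1:ℚ) else 0))
      = S0 + w j * (2 * (if x j then (1:ℚ) else 0) - 1)
           - w i * (2 * (if x i then (1:ℚ) else 0) - 1) := by
    rw [sumS_update, sumS_update, Function.update_of_ne (Ne.symm hne)]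
    have h1 : (if !(x i) then (1:ℚ) else 0) - (if z i then 1 else 0)
        = -(2 * (if x i then (1:ℚ) else 0) - 1) := by
      rw [hzi]; cases x i <;> norm_num
    have h2 : (if x j then (1:ℚ) else 0) - (if z j then 1 else 0)
        = (2 * (if x j then (1:ℚ) else 0) - 1) := by
      rw [bool_flip hzj]; cases x j <;> norm_num
    rw [h1, h2]; ring
  by_cases hLx : linOut w t x = true
  · have hAB : w i * (2 * (if x i then (1:ℚ) else 0) - 1)
        ≤ w j * (2 * (if x j then (1:ℚ) else 0) - 1) := by
      have h := hij
      rw [score, score, hLx] at h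
      cases hci : x i <;> cases hcj : x j <;> rw [hci, hcj] at h <;>
        norm_num at h ⊢ <;> linarith
    have ht : t ≤ S0 := by
      have h : linOut w t z = true := by rw [hL, hLx]
      exact of_decide_eq_true h
    rw [hLx]
    apply decide_eq_true
    rw [hupd]
    linarith
  · have hLx' : linOut w t x = false := by simpa using hLx
    have hAB : w j * (2 * (if x j then (1:ℚ) else 0) - 1)
        ≤ w i * (2 * (if x i then (1:ℚ) else 0) - 1) := by
      have h := hij
      rw [score, score, hLx'] at h
      cases hci : x i <;> cases hcj : x j <;> rw [hci, hcj] at h <;>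
        norm_num at h ⊢ <;> linarith
    have ht : ¬ (t ≤ S0) := by
      have h : linOut w t z = false := by rw [hL, hLx']
      simpa [linOut, hS0] using h
    rw [hLx']
    apply decide_eq_false
    rw [hupd]
    intro hcon
    exact ht (by linarith)

theorem swap_feature_for_higher_score (d : ℕ) (hd : 1 ≤ d) (w : Fin d → ℚ) (t : ℚ)
    (x : Fin d → Bool) (y : Fin d → Option Bool) (hy : subsetOf y x)
    (i j : Fin d) (hij : score w t x i ≤ score w t x j)
    (hyi : (y i).isSome) (hyj : y j = none) :
    prSame w t x y ≤
      prSame w t x (Function.update (Function.update y i none) j (some (x j))) := by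
  have hne : i ≠ j := by
    rintro rfl; rw [hyj] at hyi; simp at hyi
  obtain ⟨b₀, hb₀⟩ := Option.isSome_iff_exists.mp hyi
  have hxi : y i = some (x i) := by rw [hb₀, hy i b₀ hb₀]
  set y' : Fin d → Option Bool :=
    Function.update (Function.update y i none) j (some (x j)) with hy'def
  have hy'j : y' j = some (x j) := Function.update_self _ _ _
  have hy'i : y' i = none := by
    rw [hy'def, Function.update_of_ne hne, Function.update_self]
  have hy'k : ∀ k, k ≠ i → k ≠ j → y' k = y k := by
    intro k hki hkj
    rw [hy'def, Function.update_of_ne hkj, Function.update_of_ne hki]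
  set τ : (Fin d → Bool) → (Fin d → Bool) :=
    fun z => Function.update (Function.update z i (if z j = x j then x i else !(x i))) j (x j)
    with hτdef
  set σ : (Fin d → Bool) → (Fin d → Bool) :=
    fun z => Function.update (Function.update z j (if z i = x i then x j else !(x j))) i (x i)
    with hσdef
  -- values of τ and σ
  have hτj : ∀ z, τ z j = x j := fun z => Function.update_self _ _ _
  have hτi : ∀ z, τ z i = if z j = x j then x i else !(x i) := by
    intro z
    show (Function.update (Function.update z i _) j _) i = _
    rw [Function.update_of_ne hne, Function.update_self]
  have hτk : ∀ z k, k ≠ i → k ≠ j → τ z k = z k := by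
    intro z k hki hkj
    show (Function.update (Function.update z i _) j _) k = _
    rw [Function.update_of_ne hkj, Function.update_of_ne hki]
  have hσi : ∀ z, σ z i = x i := fun z => Function.update_self _ _ _
  have hσj : ∀ z, σ z j = if z i = x i then x j else !(x j) := by
    intro z
    show (Function.update (Function.update z j _) i _) j = _
    rw [Function.update_of_ne (Ne.symm hne), Function.update_self]
  have hσk : ∀ z k, k ≠ i → k ≠ j → σ z k = z k := by
    intro z k hki hkj
    show (Function.update (Function.update z j _) i _) k = _
    rw [Function.update_of_ne hki, Function.update_of_ne hkj]
  -- τ maps completions y into completions y'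
  have hτmem : ∀ z ∈ completions y, τ z ∈ completions y' := by
    intro z hz
    rw [mem_completions_iff] at hz ⊢
    intro k b hk
    by_cases hki : k = i
    · rw [hki, hy'i] at hk; exact absurd hk (by simp)
    by_cases hkj : k = j
    · rw [hkj, hy'j] at hk
      injection hk with h
      rw [hkj, hτj, h]
    · rw [hy'k k hki hkj] at hk
      rw [hτk z k hki hkj]; exact hz k b hk
  have hσmem : ∀ z ∈ completions y', σ z ∈ completions y := by
    intro z hz
    rw [mem_completions_iff] at hz ⊢
    intro k b hk
    by_cases hki : k = i
    · rw [hki, hxi] at hk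
      injection hk with h
      rw [hki, hσi, h]
    by_cases hkj : k = j
    · rw [hkj, hyj] at hk; exact absurd hk (by simp)
    · rw [← hy'k k hki hkj] at hk
      rw [hσk z k hki hkj]; exact hz k b hk
  -- agreement values at fixed coordinates
  have hzi_of : ∀ z ∈ completions y, z i = x i := by
    intro z hz
    rw [mem_completions_iff] at hz
    exact hz i (x i) hxi
  have hzj_of : ∀ z ∈ completions y', z j = x j := by
    intro z hz
    rw [mem_completions_iff] at hz
    exact hz j (x j) hy'j
  -- σ ∘ τ = id on completions y
  have hστ : ∀ z ∈ completions y, σ (τ z) = z := by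
    intro z hz
    have hzi := hzi_of z hz
    funext k
    by_cases hki : k = i
    · rw [hki, hσi, hzi]
    by_cases hkj : k = j
    · rw [hkj, hσj, hτi]
      by_cases h : z j = x j
      · rw [if_pos h, if_pos rfl]; exact h.symm
      · rw [if_neg h, if_neg (Bool.not_ne_self (x i))]; exact (bool_flip h).symm
    · rw [hσk _ k hki hkj, hτk z k hki hkj]
  -- τ ∘ σ = id on completions y'
  have hτσ : ∀ z ∈ completions y', τ (σ z) = z := by
    intro z hz
    have hzj := hzj_of z hz
    funext k
    by_cases hkj : k = j
    · rw [hkj, hτj, hzj]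
    by_cases hki : k = i
    · rw [hki, hτi, hσj]
      by_cases h : z i = x i
      · rw [if_pos h, if_pos rfl]; exact h.symm
      · rw [if_neg h, if_neg (Bool.not_ne_self (x j))]; exact (bool_flip h).symm
    · rw [hτk _ k hki hkj, hσk z k hki hkj]
  -- τ preserves the classifier agreement
  have hτL : ∀ z ∈ completions y, linOut w t z = linOut w t x →
      linOut w t (τ z) = linOut w t x := by
    intro z hz hL
    have hzi := hzi_of z hz
    by_cases h : z j = x j
    · have hτz : τ z = z := by
        funext k
        by_cases hki : k = i
        · rw [hki, hτi, if_pos h]; exact hzi.symm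
        by_cases hkj : k = j
        · rw [hkj, hτj, h]
        · exact hτk z k hki hkj
      rw [hτz]; exact hL
    · have hτz : τ z = Function.update (Function.update z i (!(x i))) j (x j) := by
        rw [hτdef]; simp only [if_neg h]
      rw [hτz]
      exact key_flip w t x i j hij hne z hzi h hL
  -- equality of total counts
  have hcard : (completions y).card = (completions y').card :=
    Finset.card_bij' (fun z _ => τ z) (fun z _ => σ z) hτmem hσmem hστ hτσ
  -- inequality of good counts
  have hgood : ((completions y).filter (fun z => linOut w t z = linOut w t x)).card
      ≤ ((completions y').filter (fun z => linOut w t z = linOut w t x)).card := by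
    apply Finset.card_le_card_of_injOn τ
    · intro z hz
      rw [Finset.mem_coe, Finset.mem_filter] at hz ⊢
      exact ⟨hτmem z hz.1, hτL z hz.1 hz.2⟩
    · intro z₁ h₁ z₂ h₂ he
      rw [Finset.mem_coe, Finset.mem_filter] at h₁ h₂
      rw [← hστ z₁ h₁.1, ← hστ z₂ h₂.1, he]
  -- nonemptiness
  have hxmem : x ∈ completions y := by
    rw [mem_completions_iff]; exact hy
  have hpos : (0:ℚ) < ((completions y).card : ℚ) := by
    have h : 0 < (completions y).card := Finset.card_pos.mpr ⟨x, hxmem⟩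
    exact_mod_cast h
  rw [prSame, prSame, ← hcard]
  have hle : ((Finset.filter (fun z => linOut w t z = linOut w t x) (completions y)).card : ℚ)
      ≤ ((Finset.filter (fun z => linOut w t z = linOut w t x) (completions y')).card : ℚ) := by
    exact_mod_cast hgood
  gcongr
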